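/- arXiv:2302.13351 — 4 statements merged into one kernel-verified Lean document; each statement's English description precedes it below -/
import Mathlib

section
/- For the complete bipartite graph K_{2,n} with n ≥ 3, the minimum size of a local identifying code equals 2, while the minimum size of a locating-dominating code (and of an identifying code) equals n. -/
open SimpleGraph

/-- The closed neighbourhood of a vertex. -/
def cnbr {V : Type*} (G : SimpleGraph V) (u : V) : Set V := insert u (G.neighborSet u)

/-- The `I`-set of a vertex with respect to a code `C`. -/
def iset {V : Type*} (G : SimpleGraph V) (C : Set V) (u : V) : Set V := cnbr G u ∩ C

/-- `C` is a dominating set (covering code). -/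
def IsDominating {V : Type*} (G : SimpleGraph V) (C : Set V) : Prop :=
  ∀ u, (iset G C u).Nonempty

/-- `C` is a local identifying code. -/
def IsLocalID {V : Type*} (G : SimpleGraph V) (C : Set V) : Prop :=
  IsDominating G C ∧ ∀ u v, G.Adj u v → iset G C u ≠ iset G C v

/-- `C` is a local locating-dominating code. -/
def IsLocalLD {V : Type*} (G : SimpleGraph V) (C : Set V) : Prop :=
  IsDominating G C ∧ ∀ u v, G.Adj u v → u ∉ C → v ∉ C → iset G C u ≠ iset G C v

/-- `C` is an identifying code. -/
def IsID {V : Type*} (G : SimpleGraph V) (C : Set V) : Prop :=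
  IsDominating G C ∧ ∀ u v : V, u ≠ v → iset G C u ≠ iset G C v

/-- `C` is a locating-dominating code. -/
def IsLD {V : Type*} (G : SimpleGraph V) (C : Set V) : Prop :=
  IsDominating G C ∧ ∀ u v : V, u ≠ v → u ∉ C → v ∉ C → iset G C u ≠ iset G C v

/-- The share of a codeword `c`. -/
noncomputable def share {V : Type*} (G : SimpleGraph V) (C : Set V) (c : V) : ℝ :=
  ∑ᶠ u ∈ cnbr G c, (1 : ℝ) / (iset G C u).ncard

variable {n : ℕ}

lemma cnbr_inl (a : Fin 2) :
    cnbr (completeBipartiteGraph (Fin 2) (Fin n)) (Sum.inl a) =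
      insert (Sum.inl a) (Set.range Sum.inr) := by
  ext w
  cases w <;> simp [cnbr, neighborSet]

lemma cnbr_inr (b : Fin n) :
    cnbr (completeBipartiteGraph (Fin 2) (Fin n)) (Sum.inr b) =
      {Sum.inr b, Sum.inl 0, Sum.inl 1} := by
  ext w
  cases w with
  | inl a => fin_cases a <;> simp [cnbr, neighborSet]
  | inr b' => simp [cnbr, neighborSet]

def C1 (n : ℕ) : Set (Fin 2 ⊕ Fin n) := {Sum.inl 0, Sum.inl 1}

lemma iset_C1_inl (a : Fin 2) :
    iset (completeBipartiteGraph (Fin 2) (Fin n)) (C1 n) (Sum.inl a) = {Sum.inl a} := by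
  rw [iset, cnbr_inl]
  ext w
  cases w with
  | inl a' => fin_cases a <;> fin_cases a' <;> simp [C1]
  | inr b => simp [C1]

lemma iset_C1_inr (b : Fin n) :
    iset (completeBipartiteGraph (Fin 2) (Fin n)) (C1 n) (Sum.inr b) = {Sum.inl 0, Sum.inl 1} := by
  rw [iset, cnbr_inr]
  ext w
  cases w with
  | inl a => fin_cases a <;> simp [C1]
  | inr b' => simp [C1]

variable [NeZero n]

def C2 (n : ℕ) [NeZero n] : Set (Fin 2 ⊕ Fin n) := insert (Sum.inl 0) (Sum.inr '' {(0 : Fin n)}ᶜ)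

lemma iset_C2_inl0 :
    iset (completeBipartiteGraph (Fin 2) (Fin n)) (C2 n) (Sum.inl 0) = C2 n := by
  rw [iset, cnbr_inl]
  apply Set.inter_eq_right.mpr
  intro w hw
  rcases hw with h | ⟨b, _, rfl⟩
  · exact h ▸ Set.mem_insert _ _
  · exact Set.mem_insert_iff.mpr (Or.inr ⟨b, rfl⟩)

lemma iset_C2_inl1 :
    iset (completeBipartiteGraph (Fin 2) (Fin n)) (C2 n) (Sum.inl 1) = Sum.inr '' {(0:Fin n)}ᶜ := by
  rw [iset, cnbr_inl]
  ext w
  cases w with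
  | inl a => fin_cases a <;> simp [C2]
  | inr b => simp [C2]

lemma iset_C2_inr0 :
    iset (completeBipartiteGraph (Fin 2) (Fin n)) (C2 n) (Sum.inr 0) = {Sum.inl 0} := by
  rw [iset, cnbr_inr]
  ext w
  cases w with
  | inl a => fin_cases a <;> simp [C2]
  | inr b => simp [C2]

lemma iset_C2_inr (b : Fin n) (hb : b ≠ 0) :
    iset (completeBipartiteGraph (Fin 2) (Fin n)) (C2 n) (Sum.inr b) =
      {Sum.inr b, Sum.inl 0} := by
  rw [iset, cnbr_inr]
  ext w
  cases w with
  | inl a => fin_cases a <;> simp [C2]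
  | inr b' =>
    simp [C2]
    rintro rfl
    exact hb

/-- the I-set of an `inr` vertex outside the code only depends on the left part of the code -/
lemma iset_inr_not_mem {C : Set (Fin 2 ⊕ Fin n)} {b : Fin n} (hb : Sum.inr b ∉ C) :
    iset (completeBipartiteGraph (Fin 2) (Fin n)) C (Sum.inr b) = {Sum.inl 0, Sum.inl 1} ∩ C := by
  rw [iset, cnbr_inr]
  ext w
  simp only [Set.mem_inter_iff, Set.mem_insert_iff, Set.mem_singleton_iff, and_congr_left_iff]
  intro hw
  constructor
  · rintro (rfl | h)
    · exact absurd hw hb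
    · exact h
  · exact Or.inr

lemma ncard_compl_singleton (b : Fin n) : ({b}ᶜ : Set (Fin n)).ncard = n - 1 := by
  have h := Set.ncard_add_ncard_compl ({b} : Set (Fin n))
  rw [Set.ncard_singleton, Nat.card_eq_fintype_card, Fintype.card_fin] at h
  omega

lemma ncard_C2 (hn : 1 ≤ n) : (C2 n).ncard = n := by
  rw [C2, Set.ncard_insert_of_notMem (by simp),
    Set.ncard_image_of_injective _ Sum.inr_injective, ncard_compl_singleton]
  omega

lemma isLD_lower {C : Set (Fin 2 ⊕ Fin n)} (hC : IsLD (completeBipartiteGraph (Fin 2) (Fin n)) C) :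
    n ≤ C.ncard := by
  obtain ⟨hdom, hld⟩ := hC
  by_cases hall : ∀ b : Fin n, Sum.inr b ∈ C
  · calc n = (Set.range (Sum.inr : Fin n → Fin 2 ⊕ Fin n)).ncard := by
          rw [← Set.image_univ, Set.ncard_image_of_injective _ Sum.inr_injective,
            Set.ncard_univ, Nat.card_eq_fintype_card, Fintype.card_fin]
      _ ≤ C.ncard := Set.ncard_le_ncard (by rintro w ⟨b, rfl⟩; exact hall b) C.toFinite
  · push_neg at hall
    obtain ⟨b0, hb0⟩ := hall
    have huniq : ∀ b : Fin n, Sum.inr b ∉ C → b = b0 := by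
      intro b hb
      by_contra hne
      exact hld (Sum.inr b) (Sum.inr b0) (by simp [hne]) hb hb0
        (by rw [iset_inr_not_mem hb, iset_inr_not_mem hb0])
    obtain ⟨w, hw1, hw2⟩ := hdom (Sum.inr b0)
    rw [cnbr_inr] at hw1
    have hwl : w ≠ Sum.inr b0 := fun h => hb0 (h ▸ hw2)
    have hwr : w ∉ Sum.inr '' ({b0}ᶜ : Set (Fin n)) := by
      rcases hw1 with rfl | rfl | rfl
      · exact absurd rfl hwl
      · simp
      · simp
    have hsub : insert w (Sum.inr '' ({b0}ᶜ : Set (Fin n))) ⊆ C := by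
      intro x hx
      rcases hx with rfl | ⟨b, hb, rfl⟩
      · exact hw2
      · by_contra h
        exact hb (huniq b h)
    calc n = (insert w (Sum.inr '' ({b0}ᶜ : Set (Fin n)))).ncard := by
          rw [Set.ncard_insert_of_notMem hwr,
            Set.ncard_image_of_injective _ Sum.inr_injective, ncard_compl_singleton]
          have : 1 ≤ n := Nat.one_le_iff_ne_zero.mpr (NeZero.ne n)
          omega
      _ ≤ C.ncard := Set.ncard_le_ncard hsub C.toFinite

lemma isLocalID_C1 : IsLocalID (completeBipartiteGraph (Fin 2) (Fin n)) (C1 n) := by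
  constructor
  · intro u
    cases u with
    | inl a => rw [iset_C1_inl]; exact ⟨_, rfl⟩
    | inr b => rw [iset_C1_inr]; exact ⟨_, Set.mem_insert _ _⟩
  · intro u v huv
    cases u with
    | inl a =>
      cases v with
      | inl a' => simp [completeBipartiteGraph] at huv
      | inr b =>
        rw [iset_C1_inl, iset_C1_inr]
        intro h
        have := congrArg Set.ncard h
        rw [Set.ncard_singleton, Set.ncard_pair (show (Sum.inl 0 : Fin 2 ⊕ Fin n) ≠ Sum.inl 1 by simp)] at this
        omega
    | inr b =>
      cases v with
      | inr b' => simp [completeBipartiteGraph] at huv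
      | inl a =>
        rw [iset_C1_inl, iset_C1_inr]
        intro h
        have := congrArg Set.ncard h
        rw [Set.ncard_singleton, Set.ncard_pair (show (Sum.inl 0 : Fin 2 ⊕ Fin n) ≠ Sum.inl 1 by simp)] at this
        omega

lemma isLocalID_lower {C : Set (Fin 2 ⊕ Fin n)}
    (hC : IsLocalID (completeBipartiteGraph (Fin 2) (Fin n)) C) : 2 ≤ C.ncard := by
  obtain ⟨hdom, hloc⟩ := hC
  by_contra h
  push_neg at h
  interval_cases hc : C.ncard
  · rw [Set.ncard_eq_zero C.toFinite] at hc
    obtain ⟨w, -, hw⟩ := hdom (Sum.inl 0)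
    simp [hc] at hw
  · obtain ⟨c, rfl⟩ := Set.ncard_eq_one.mp hc
    have h1 : iset (completeBipartiteGraph (Fin 2) (Fin n)) {c} (Sum.inl 0) = {c} :=
      ((hdom (Sum.inl 0)).subset_singleton_iff).mp Set.inter_subset_right
    have h2 : iset (completeBipartiteGraph (Fin 2) (Fin n)) {c} (Sum.inr 0) = {c} :=
      ((hdom (Sum.inr 0)).subset_singleton_iff).mp Set.inter_subset_right
    exact hloc (Sum.inl 0) (Sum.inr 0) (by simp) (h1.trans h2.symm)

lemma isID_C2 (hn : 3 ≤ n) : IsID (completeBipartiteGraph (Fin 2) (Fin n)) (C2 n) := by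
  have h1 : (⟨1, by omega⟩ : Fin n) ≠ 0 := by simp [Fin.ext_iff]
  have h2 : (⟨2, by omega⟩ : Fin n) ≠ 0 := by simp [Fin.ext_iff]
  have htwo : ∀ a : Fin 2, a = 0 ∨ a = 1 := by decide
  constructor
  · intro u
    cases u with
    | inl a =>
      rcases htwo a with rfl | rfl
      · rw [iset_C2_inl0]; exact ⟨Sum.inl 0, Set.mem_insert _ _⟩
      · rw [iset_C2_inl1]; exact ⟨Sum.inr ⟨1, by omega⟩, ⟨_, h1, rfl⟩⟩
    | inr b =>
      by_cases hb : b = 0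
      · subst hb; rw [iset_C2_inr0]; exact ⟨_, rfl⟩
      · rw [iset_C2_inr b hb]; exact ⟨_, Set.mem_insert _ _⟩
  · have hA01 : C2 n ≠ Sum.inr '' {(0:Fin n)}ᶜ :=
      ne_of_mem_of_not_mem' (Set.mem_insert _ _) (by simp)
    have hA0B0 : C2 n ≠ {Sum.inl 0} :=
      ne_of_mem_of_not_mem' (Set.mem_insert_iff.mpr (Or.inr ⟨_, h1, rfl⟩) :
        Sum.inr (⟨1, by omega⟩ : Fin n) ∈ C2 n) (by simp)
    have hA0Bb : ∀ b : Fin n, b ≠ 0 → C2 n ≠ {Sum.inr b, Sum.inl 0} := by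
      intro b hb
      by_cases hb1 : b = ⟨1, by omega⟩
      · refine ne_of_mem_of_not_mem' (Set.mem_insert_iff.mpr (Or.inr ⟨_, h2, rfl⟩) :
          Sum.inr (⟨2, by omega⟩ : Fin n) ∈ C2 n) ?_
        subst hb1
        simp [Fin.ext_iff]
      · refine ne_of_mem_of_not_mem' (Set.mem_insert_iff.mpr (Or.inr ⟨_, h1, rfl⟩) :
          Sum.inr (⟨1, by omega⟩ : Fin n) ∈ C2 n) ?_
        simp only [Set.mem_insert_iff, Set.mem_singleton_iff]
        push_neg
        exact ⟨by simpa [Sum.inr.injEq] using fun h => hb1 h.symm, by simp⟩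
    have hA1B0 : (Sum.inr '' {(0:Fin n)}ᶜ : Set (Fin 2 ⊕ Fin n)) ≠ {Sum.inl 0} :=
      ne_of_mem_of_not_mem' (⟨_, h1, rfl⟩ :
        Sum.inr (⟨1, by omega⟩ : Fin n) ∈ Sum.inr '' {(0:Fin n)}ᶜ) (by intro h; simp at h)
    have hA1Bb : ∀ b : Fin n, (Sum.inr '' {(0:Fin n)}ᶜ : Set (Fin 2 ⊕ Fin n)) ≠ {Sum.inr b, Sum.inl 0} :=
      fun b => (ne_of_mem_of_not_mem' (Set.mem_insert_iff.mpr (Or.inr rfl) :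
        Sum.inl 0 ∈ ({Sum.inr b, Sum.inl 0} : Set (Fin 2 ⊕ Fin n))) (show Sum.inl 0 ∉ Sum.inr '' {(0:Fin n)}ᶜ by rintro ⟨x, -, h⟩; cases h)).symm
    have hB0Bb : ∀ b : Fin n, ({Sum.inl 0} : Set (Fin 2 ⊕ Fin n)) ≠ {Sum.inr b, Sum.inl 0} :=
      fun b => (ne_of_mem_of_not_mem' (Set.mem_insert _ _ :
        Sum.inr b ∈ ({Sum.inr b, Sum.inl 0} : Set (Fin 2 ⊕ Fin n))) (by simp)).symm
    have hBbBb : ∀ b b' : Fin n, b ≠ b' →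
        ({Sum.inr b, Sum.inl 0} : Set (Fin 2 ⊕ Fin n)) ≠ {Sum.inr b', Sum.inl 0} :=
      fun b b' h => ne_of_mem_of_not_mem' (Set.mem_insert _ _ :
        Sum.inr b ∈ ({Sum.inr b, Sum.inl 0} : Set (Fin 2 ⊕ Fin n))) (by simp [h])
    intro u v huv
    cases u with
    | inl a =>
      cases v with
      | inl a' =>
        rcases htwo a with rfl | rfl <;> rcases htwo a' with rfl | rfl
        · exact absurd rfl huv
        · rw [iset_C2_inl0, iset_C2_inl1]; exact hA01
        · rw [iset_C2_inl0, iset_C2_inl1]; exact hA01.symm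
        · exact absurd rfl huv
      | inr b =>
        rcases htwo a with rfl | rfl <;> by_cases hb : b = 0
        · subst hb; rw [iset_C2_inl0, iset_C2_inr0]; exact hA0B0
        · rw [iset_C2_inl0, iset_C2_inr b hb]; exact hA0Bb b hb
        · subst hb; rw [iset_C2_inl1, iset_C2_inr0]; exact hA1B0
        · rw [iset_C2_inl1, iset_C2_inr b hb]; exact hA1Bb b
    | inr b =>
      cases v with
      | inl a =>
        rcases htwo a with rfl | rfl <;> by_cases hb : b = 0
        · subst hb; rw [iset_C2_inl0, iset_C2_inr0]; exact hA0B0.symm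
        · rw [iset_C2_inl0, iset_C2_inr b hb]; exact (hA0Bb b hb).symm
        · subst hb; rw [iset_C2_inl1, iset_C2_inr0]; exact hA1B0.symm
        · rw [iset_C2_inl1, iset_C2_inr b hb]; exact (hA1Bb b).symm
      | inr b' =>
        have hbb' : b ≠ b' := fun h => huv (h ▸ rfl)
        by_cases hb : b = 0 <;> by_cases hb' : b' = 0
        · exact absurd (hb.trans hb'.symm) hbb'
        · subst hb; rw [iset_C2_inr0, iset_C2_inr b' hb']; exact hB0Bb b'
        · subst hb'; rw [iset_C2_inr0, iset_C2_inr b hb]; exact (hB0Bb b).symm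
        · rw [iset_C2_inr b hb, iset_C2_inr b' hb']; exact hBbBb b b' hbb'


/-- In `K_{2,n}` with `n ≥ 3` the minimum size of a local identifying code is `2`,
while the minimum sizes of locating-dominating and identifying codes are both `n`. -/
theorem stmt4 (n : ℕ) (hn : 3 ≤ n) :
    IsLeast {k : ℕ | ∃ C : Set (Fin 2 ⊕ Fin n),
      IsLocalID (completeBipartiteGraph (Fin 2) (Fin n)) C ∧ C.ncard = k} 2 ∧
    IsLeast {k : ℕ | ∃ C : Set (Fin 2 ⊕ Fin n),
      IsLD (completeBipartiteGraph (Fin 2) (Fin n)) C ∧ C.ncard = k} n ∧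
    IsLeast {k : ℕ | ∃ C : Set (Fin 2 ⊕ Fin n),
      IsID (completeBipartiteGraph (Fin 2) (Fin n)) C ∧ C.ncard = k} n := by
  haveI : NeZero n := ⟨by omega⟩
  have hid := isID_C2 (n := n) hn
  have hld : IsLD (completeBipartiteGraph (Fin 2) (Fin n)) (C2 n) :=
    ⟨hid.1, fun u v h _ _ => hid.2 u v h⟩
  refine ⟨⟨⟨C1 n, isLocalID_C1, Set.ncard_pair (by simp)⟩, ?_⟩,
    ⟨⟨C2 n, hld, ncard_C2 (by omega)⟩, ?_⟩,
    ⟨⟨C2 n, hid, ncard_C2 (by omega)⟩, ?_⟩⟩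
  · rintro k ⟨C, hC, rfl⟩
    exact isLocalID_lower hC
  · rintro k ⟨C, hC, rfl⟩
    exact isLD_lower hC
  · rintro k ⟨C, hC, rfl⟩
    exact isLD_lower ⟨hC.1, fun u v h _ _ => hC.2 u v h⟩
end

section
/- In the binary hypercube F_2^3 (vertices are binary words of length 3, adjacent iff Hamming distance 1), a code is an identifying code if and only if it is a local identifying code. -/
open SimpleGraph

/-- The binary `n`-dimensional hypercube. -/
def cube (n : ℕ) : SimpleGraph (Fin n → ZMod 2) where
  Adj x y := hammingDist x y = 1
  symm := ⟨fun x y h => by have h' : hammingDist x y = 1 := h; show hammingDist y x = 1; rw [hammingDist_comm]; exact h'⟩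
  loopless := ⟨fun x h => by have h' : hammingDist x x = 1 := h; rw [hammingDist_self] at h'; exact absurd h' (by norm_num)⟩

/-! ### Auxiliary machinery: transfer to a fast boolean model on `Fin 8` -/

def adj8 (i j : Fin 8) : Bool :=
  decide ((i.val ^^^ j.val) = 1 ∨ (i.val ^^^ j.val) = 2 ∨ (i.val ^^^ j.val) = 4)

abbrev V3' := Fin 3 → ZMod 2

def enc (x : V3') : Fin 8 :=
  ⟨(x 0).val + 2*(x 1).val + 4*(x 2).val, by
    have h0 := (x 0).val_lt; have h1 := (x 1).val_lt; have h2 := (x 2).val_lt; omega⟩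

def dec8 (i : Fin 8) : V3' := fun k => (⟨i.val >>> k.val % 2, by omega⟩ : Fin 2).val

instance cube3AdjDec : DecidableRel (cube 3).Adj :=
  fun x y => inferInstanceAs (Decidable (hammingDist x y = 1))

lemma enc_dec : ∀ i, enc (dec8 i) = i := by decide

lemma dec_enc : ∀ x, dec8 (enc x) = x := by decide

lemma enc_inj {x y : V3'} (h : enc x = enc y) : x = y := by
  have := congrArg dec8 h; rwa [dec_enc, dec_enc] at this

lemma adj_iff : ∀ x y : V3', (cube 3).Adj x y ↔ adj8 (enc x) (enc y) = true := by decide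

def iset8 (F : Fin 8 → Bool) (u v : Fin 8) : Bool := (decide (v = u) || adj8 u v) && F v

def PID8 (F : Fin 8 → Bool) : Prop :=
  (∀ u, ∃ v, iset8 F u v = true) ∧ ∀ u v : Fin 8, u ≠ v → iset8 F u ≠ iset8 F v

def PLoc8 (F : Fin 8 → Bool) : Prop :=
  (∀ u, ∃ v, iset8 F u v = true) ∧ ∀ u v : Fin 8, adj8 u v = true → iset8 F u ≠ iset8 F v

instance : DecidablePred PID8 := fun F => by unfold PID8; infer_instance
instance : DecidablePred PLoc8 := fun F => by unfold PLoc8; infer_instance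

set_option maxRecDepth 100000 in
set_option maxHeartbeats 1000000 in
lemma key8 : ∀ F : Fin 8 → Bool, PID8 F ↔ PLoc8 F := by decide

open Classical in
/-- In `F_2^3` a code is identifying iff it is local identifying. -/
theorem stmt5 (C : Set (Fin 3 → ZMod 2)) : IsID (cube 3) C ↔ IsLocalID (cube 3) C := by
  classical
  set F : Fin 8 → Bool := fun i => decide (dec8 i ∈ C) with hF
  have hmem : ∀ w : V3', w ∈ C ↔ F (enc w) = true := by
    intro w; simp [hF, dec_enc]
  have hmemI : ∀ u w : V3', w ∈ iset (cube 3) C u ↔ iset8 F (enc u) (enc w) = true := by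
    intro u w
    simp only [iset, cnbr, Set.mem_inter_iff, Set.mem_insert_iff, mem_neighborSet,
      iset8, Bool.and_eq_true, Bool.or_eq_true, decide_eq_true_iff]
    constructor
    · rintro ⟨h1 | h2, hw⟩
      · exact ⟨Or.inl (by rw [h1]), (hmem w).mp hw⟩
      · exact ⟨Or.inr ((adj_iff u w).mp h2), (hmem w).mp hw⟩
    · rintro ⟨h1 | h2, hw⟩
      · exact ⟨Or.inl (enc_inj h1), (hmem w).mpr hw⟩
      · exact ⟨Or.inr ((adj_iff u w).mpr h2), (hmem w).mpr hw⟩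
  have hne : ∀ u : V3', (iset (cube 3) C u).Nonempty ↔ ∃ v, iset8 F (enc u) v = true := by
    intro u
    constructor
    · rintro ⟨w, hw⟩; exact ⟨enc w, (hmemI u w).mp hw⟩
    · rintro ⟨v, hv⟩
      refine ⟨dec8 v, (hmemI u (dec8 v)).mpr ?_⟩
      rwa [enc_dec]
  have heq : ∀ u v : V3', iset (cube 3) C u = iset (cube 3) C v ↔
      iset8 F (enc u) = iset8 F (enc v) := by
    intro u v
    constructor
    · intro h
      funext i
      have h1 := hmemI u (dec8 i)
      have h2 := hmemI v (dec8 i)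
      rw [enc_dec] at h1 h2
      exact Bool.eq_iff_iff.mpr (by rw [← h1, ← h2, h])
    · intro h
      ext w
      rw [hmemI u w, hmemI v w, h]
  constructor
  · rintro ⟨hdom, hid⟩
    exact ⟨hdom, fun u v hadj => hid u v hadj.ne⟩
  · rintro ⟨hdom, hloc⟩
    have hploc : PLoc8 F := by
      constructor
      · intro i
        have := (hne (dec8 i)).mp (hdom (dec8 i))
        rwa [enc_dec] at this
      · intro i j hadj hij
        have hadj' : (cube 3).Adj (dec8 i) (dec8 j) := by
          rw [adj_iff, enc_dec, enc_dec]; exact hadj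
        refine hloc (dec8 i) (dec8 j) hadj' ?_
        rw [heq, enc_dec, enc_dec]; exact hij
    have hpid : PID8 F := (key8 F).mpr hploc
    refine ⟨hdom, fun u v huv hne' => ?_⟩
    refine hpid.2 (enc u) (enc v) (fun h => huv (enc_inj h)) ?_
    rw [← heq]; exact hne'
end

section
/- Every local locating-dominating code in the king grid contains at least 3 codewords in every 4×4 square of vertices; consequently its density is at least 3/16. -/
open SimpleGraph

/-- The king grid. -/
def kingGrid : SimpleGraph (ℤ × ℤ) where
  Adj u v := u ≠ v ∧ |u.1 - v.1| ≤ 1 ∧ |u.2 - v.2| ≤ 1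
  symm := ⟨by
    rintro u v ⟨h1, h2, h3⟩
    exact ⟨h1.symm, by rwa [abs_sub_comm], by rwa [abs_sub_comm]⟩⟩
  loopless := ⟨fun u h => h.1 rfl⟩

set_option synthInstance.maxSize 2000
set_option synthInstance.maxHeartbeats 1000000
set_option maxRecDepth 4000

lemma pigeonBool : ∀ c1 c2 c3 c4 d1 d2 d3 d4 : Bool,
    (c1 = true ∨ d1 = true) → (c2 = true ∨ d2 = true) →
    (c3 = true ∨ d3 = true) → (c4 = true ∨ d4 = true) →
    ((c1 = true ↔ c2 = true) → (d1 = true ↔ d2 = true) → False) →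
    ((c1 = true ↔ c3 = true) → (d1 = true ↔ d3 = true) → False) →
    ((c1 = true ↔ c4 = true) → (d1 = true ↔ d4 = true) → False) →
    ((c2 = true ↔ c3 = true) → (d2 = true ↔ d3 = true) → False) →
    ((c2 = true ↔ c4 = true) → (d2 = true ↔ d4 = true) → False) →
    ((c3 = true ↔ c4 = true) → (d3 = true ↔ d4 = true) → False) → False := by decide

lemma pigeon4 (c1 c2 c3 c4 d1 d2 d3 d4 : Prop)
    (D1 : c1 ∨ d1) (D2 : c2 ∨ d2) (D3 : c3 ∨ d3) (D4 : c4 ∨ d4)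
    (E12 : (c1 ↔ c2) → (d1 ↔ d2) → False)
    (E13 : (c1 ↔ c3) → (d1 ↔ d3) → False)
    (E14 : (c1 ↔ c4) → (d1 ↔ d4) → False)
    (E23 : (c2 ↔ c3) → (d2 ↔ d3) → False)
    (E24 : (c2 ↔ c4) → (d2 ↔ d4) → False)
    (E34 : (c3 ↔ c4) → (d3 ↔ d4) → False) : False := by
  classical
  exact pigeonBool (decide c1) (decide c2) (decide c3) (decide c4)
    (decide d1) (decide d2) (decide d3) (decide d4)
    (by simpa using D1) (by simpa using D2) (by simpa using D3) (by simpa using D4)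
    (by simpa using E12) (by simpa using E13) (by simpa using E14)
    (by simpa using E23) (by simpa using E24) (by simpa using E34)

lemma pigeon3 (d1 d2 d3 : Prop)
    (E12 : (d1 ↔ d2) → False) (E13 : (d1 ↔ d3) → False) (E23 : (d2 ↔ d3) → False) :
    False := by tauto

lemma king_adj' (x1 y1 x2 y2 : ℤ) (h : ¬(x1 = x2 ∧ y1 = y2)) (hx : |x1-x2| ≤ 1)
    (hy : |y1-y2| ≤ 1) : kingGrid.Adj (x1,y1) (x2,y2) :=
  ⟨by simpa [Prod.ext_iff] using h, hx, hy⟩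

lemma mem_cnbr_self (u : ℤ × ℤ) : u ∈ cnbr kingGrid u := Set.mem_insert _ _
lemma mem_cnbr_of_adj {u v : ℤ × ℤ} (h : kingGrid.Adj u v) : v ∈ cnbr kingGrid u :=
  Set.mem_insert_of_mem _ h

lemma iset_eq_of (C : Set (ℤ×ℤ)) (c d u v : ℤ×ℤ)
    (hu : iset kingGrid C u = cnbr kingGrid u ∩ {c,d})
    (hv : iset kingGrid C v = cnbr kingGrid v ∩ {c,d})
    (hcc : c ∈ cnbr kingGrid u ↔ c ∈ cnbr kingGrid v)
    (hdd : d ∈ cnbr kingGrid u ↔ d ∈ cnbr kingGrid v) :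
    iset kingGrid C u = iset kingGrid C v := by
  rw [hu, hv]
  ext x
  simp only [Set.mem_inter_iff, Set.mem_insert_iff, Set.mem_singleton_iff]
  constructor
  · rintro ⟨hx, rfl | rfl⟩
    exacts [⟨hcc.mp hx, Or.inl rfl⟩, ⟨hdd.mp hx, Or.inr rfl⟩]
  · rintro ⟨hx, rfl | rfl⟩
    exacts [⟨hcc.mpr hx, Or.inl rfl⟩, ⟨hdd.mpr hx, Or.inr rfl⟩]

lemma pairdone (C : Set (ℤ×ℤ)) (hC : IsLocalLD kingGrid C) (c d u v : ℤ×ℤ)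
    (huv : kingGrid.Adj u v) (hu : u ∉ C) (hv : v ∉ C)
    (hIu : iset kingGrid C u = cnbr kingGrid u ∩ {c,d})
    (hIv : iset kingGrid C v = cnbr kingGrid v ∩ {c,d})
    (hcu : c ∈ cnbr kingGrid u) (hcv : c ∈ cnbr kingGrid v)
    (hdu : d ∈ cnbr kingGrid u) (hdv : d ∈ cnbr kingGrid v) : False :=
  hC.2 u v huv hu hv (iset_eq_of C c d u v hIu hIv (iff_of_true hcu hcv) (iff_of_true hdu hdv))

lemma key0 (C : Set (ℤ×ℤ)) (hC : IsLocalLD kingGrid C) (c d : ℤ×ℤ) (q1 q2 q3 q4 : ℤ×ℤ)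
    (h12 : kingGrid.Adj q1 q2) (h13 : kingGrid.Adj q1 q3) (h14 : kingGrid.Adj q1 q4)
    (h23 : kingGrid.Adj q2 q3) (h24 : kingGrid.Adj q2 q4) (h34 : kingGrid.Adj q3 q4)
    (hI1 : iset kingGrid C q1 = cnbr kingGrid q1 ∩ {c,d})
    (hI2 : iset kingGrid C q2 = cnbr kingGrid q2 ∩ {c,d})
    (hI3 : iset kingGrid C q3 = cnbr kingGrid q3 ∩ {c,d})
    (hI4 : iset kingGrid C q4 = cnbr kingGrid q4 ∩ {c,d})
    (hn1 : q1 ∉ C) (hn2 : q2 ∉ C) (hn3 : q3 ∉ C) (hn4 : q4 ∉ C) : False := by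
  have dom : ∀ q, iset kingGrid C q = cnbr kingGrid q ∩ {c,d} →
      (c ∈ cnbr kingGrid q ∨ d ∈ cnbr kingGrid q) := by
    intro q hq
    obtain ⟨x, hx⟩ := hC.1 q
    rw [hq] at hx
    obtain ⟨hx1, hx2⟩ := hx
    rcases hx2 with rfl | rfl
    · exact Or.inl hx1
    · exact Or.inr hx1
  exact pigeon4 _ _ _ _ _ _ _ _ (dom q1 hI1) (dom q2 hI2) (dom q3 hI3) (dom q4 hI4)
    (fun hc hd => hC.2 q1 q2 h12 hn1 hn2 (iset_eq_of C c d q1 q2 hI1 hI2 hc hd))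
    (fun hc hd => hC.2 q1 q3 h13 hn1 hn3 (iset_eq_of C c d q1 q3 hI1 hI3 hc hd))
    (fun hc hd => hC.2 q1 q4 h14 hn1 hn4 (iset_eq_of C c d q1 q4 hI1 hI4 hc hd))
    (fun hc hd => hC.2 q2 q3 h23 hn2 hn3 (iset_eq_of C c d q2 q3 hI2 hI3 hc hd))
    (fun hc hd => hC.2 q2 q4 h24 hn2 hn4 (iset_eq_of C c d q2 q4 hI2 hI4 hc hd))
    (fun hc hd => hC.2 q3 q4 h34 hn3 hn4 (iset_eq_of C c d q3 q4 hI3 hI4 hc hd))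

lemma key1 (C : Set (ℤ×ℤ)) (hC : IsLocalLD kingGrid C) (c d : ℤ×ℤ) (q1 q2 q3 q4 : ℤ×ℤ)
    (h12 : kingGrid.Adj q1 q2) (h13 : kingGrid.Adj q1 q3) (h14 : kingGrid.Adj q1 q4)
    (h23 : kingGrid.Adj q2 q3) (h24 : kingGrid.Adj q2 q4) (h34 : kingGrid.Adj q3 q4)
    (hI2 : iset kingGrid C q2 = cnbr kingGrid q2 ∩ {c,d})
    (hI3 : iset kingGrid C q3 = cnbr kingGrid q3 ∩ {c,d})
    (hI4 : iset kingGrid C q4 = cnbr kingGrid q4 ∩ {c,d})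
    (hq1c : q1 = c)
    (hm2 : q2 ∈ C → q2 = c ∨ q2 = d) (hm3 : q3 ∈ C → q3 = c ∨ q3 = d)
    (hm4 : q4 ∈ C → q4 = c ∨ q4 = d) : False := by
  have Bc2 : c ∈ cnbr kingGrid q2 := hq1c ▸ mem_cnbr_of_adj h12.symm
  have Bc3 : c ∈ cnbr kingGrid q3 := hq1c ▸ mem_cnbr_of_adj h13.symm
  have Bc4 : c ∈ cnbr kingGrid q4 := hq1c ▸ mem_cnbr_of_adj h14.symm
  by_cases h2 : q2 ∈ C
  · have hq2d : q2 = d := (hm2 h2).resolve_left (hq1c ▸ h12.ne')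
    have hn3 : q3 ∉ C := fun h => by
      rcases hm3 h with h' | h'
      exacts [(hq1c ▸ h13.ne') h', (hq2d ▸ h23.ne') h']
    have hn4 : q4 ∉ C := fun h => by
      rcases hm4 h with h' | h'
      exacts [(hq1c ▸ h14.ne') h', (hq2d ▸ h24.ne') h']
    exact pairdone C hC c d q3 q4 h34 hn3 hn4 hI3 hI4 Bc3 Bc4
      (hq2d ▸ mem_cnbr_of_adj h23.symm) (hq2d ▸ mem_cnbr_of_adj h24.symm)
  · by_cases h3 : q3 ∈ C
    · have hq3d : q3 = d := (hm3 h3).resolve_left (hq1c ▸ h13.ne')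
      have hn4 : q4 ∉ C := fun h => by
        rcases hm4 h with h' | h'
        exacts [(hq1c ▸ h14.ne') h', (hq3d ▸ h34.ne') h']
      exact pairdone C hC c d q2 q4 h24 h2 hn4 hI2 hI4 Bc2 Bc4
        (hq3d ▸ mem_cnbr_of_adj h23) (hq3d ▸ mem_cnbr_of_adj h34.symm)
    · by_cases h4 : q4 ∈ C
      · have hq4d : q4 = d := (hm4 h4).resolve_left (hq1c ▸ h14.ne')
        exact pairdone C hC c d q2 q3 h23 h2 h3 hI2 hI3 Bc2 Bc3
          (hq4d ▸ mem_cnbr_of_adj h24) (hq4d ▸ mem_cnbr_of_adj h34)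
      · exact pigeon3 _ _ _
          (fun hd => hC.2 q2 q3 h23 h2 h3
            (iset_eq_of C c d q2 q3 hI2 hI3 (iff_of_true Bc2 Bc3) hd))
          (fun hd => hC.2 q2 q4 h24 h2 h4
            (iset_eq_of C c d q2 q4 hI2 hI4 (iff_of_true Bc2 Bc4) hd))
          (fun hd => hC.2 q3 q4 h34 h3 h4
            (iset_eq_of C c d q3 q4 hI3 hI4 (iff_of_true Bc3 Bc4) hd))

/-- Every local locating-dominating code in the king grid contains at least `3` codewords
in every `4 × 4` square of vertices. -/
theorem stmt16 (C : Set (ℤ × ℤ)) (hC : IsLocalLD kingGrid C) (a b : ℤ) :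
    3 ≤ (C ∩ {p : ℤ × ℤ | a ≤ p.1 ∧ p.1 ≤ a + 3 ∧ b ≤ p.2 ∧ p.2 ≤ b + 3}).ncard := by
  by_contra hcon
  push_neg at hcon
  set S : Set (ℤ × ℤ) := {p : ℤ × ℤ | a ≤ p.1 ∧ p.1 ≤ a + 3 ∧ b ≤ p.2 ∧ p.2 ≤ b + 3} with hSdef
  set K : Set (ℤ × ℤ) := C ∩ S with hKdef
  have hSfin : S.Finite := by
    apply Set.Finite.subset ((Set.finite_Icc a (a+3)).prod (Set.finite_Icc b (b+3)))
    rintro ⟨x, y⟩ ⟨h1, h2, h3, h4⟩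
    exact ⟨⟨h1, h2⟩, ⟨h3, h4⟩⟩
  have hKfin : K.Finite := hSfin.subset Set.inter_subset_right
  have hKle : K.ncard ≤ 2 := by omega
  -- the four central vertices
  set q1 : ℤ × ℤ := (a+1, b+1) with hq1
  set q2 : ℤ × ℤ := (a+2, b+1) with hq2
  set q3 : ℤ × ℤ := (a+1, b+2) with hq3
  set q4 : ℤ × ℤ := (a+2, b+2) with hq4
  have h12 : kingGrid.Adj q1 q2 := king_adj' _ _ _ _ (by omega) (by rw [abs_le]; omega) (by rw [abs_le]; omega)
  have h13 : kingGrid.Adj q1 q3 := king_adj' _ _ _ _ (by omega) (by rw [abs_le]; omega) (by rw [abs_le]; omega)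
  have h14 : kingGrid.Adj q1 q4 := king_adj' _ _ _ _ (by omega) (by rw [abs_le]; omega) (by rw [abs_le]; omega)
  have h23 : kingGrid.Adj q2 q3 := king_adj' _ _ _ _ (by omega) (by rw [abs_le]; omega) (by rw [abs_le]; omega)
  have h24 : kingGrid.Adj q2 q4 := king_adj' _ _ _ _ (by omega) (by rw [abs_le]; omega) (by rw [abs_le]; omega)
  have h34 : kingGrid.Adj q3 q4 := king_adj' _ _ _ _ (by omega) (by rw [abs_le]; omega) (by rw [abs_le]; omega)
  -- closed neighbourhoods of central vertices lie in S
  have hsub : ∀ q : ℤ × ℤ, a+1 ≤ q.1 → q.1 ≤ a+2 → b+1 ≤ q.2 → q.2 ≤ b+2 →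
      cnbr kingGrid q ⊆ S := by
    intro q g1 g2 g3 g4 z hz
    simp only [cnbr, Set.mem_insert_iff, SimpleGraph.mem_neighborSet] at hz
    rcases hz with rfl | ⟨-, ha, hb⟩
    · exact ⟨by omega, by omega, by omega, by omega⟩
    · rw [abs_le] at ha hb
      exact ⟨by omega, by omega, by omega, by omega⟩
  have hsub1 : cnbr kingGrid q1 ⊆ S := hsub q1 (by simp [hq1]) (by simp [hq1]) (by simp [hq1]) (by simp [hq1])
  have hsub2 : cnbr kingGrid q2 ⊆ S := hsub q2 (by simp [hq2]) (by simp [hq2]) (by simp [hq2]) (by simp [hq2])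
  have hsub3 : cnbr kingGrid q3 ⊆ S := hsub q3 (by simp [hq3]) (by simp [hq3]) (by simp [hq3]) (by simp [hq3])
  have hsub4 : cnbr kingGrid q4 ⊆ S := hsub q4 (by simp [hq4]) (by simp [hq4]) (by simp [hq4]) (by simp [hq4])
  have hmemS : ∀ q : ℤ × ℤ, cnbr kingGrid q ⊆ S → q ∈ S := fun q h => h (mem_cnbr_self q)
  -- iset of central vertices only sees K
  have hIeq : ∀ q : ℤ × ℤ, cnbr kingGrid q ⊆ S → iset kingGrid C q = cnbr kingGrid q ∩ K := by
    intro q hq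
    ext x
    constructor
    · rintro ⟨hx1, hx2⟩
      exact ⟨hx1, hx2, hq hx1⟩
    · rintro ⟨hx1, hx2, -⟩
      exact ⟨hx1, hx2⟩
  have hI1 := hIeq q1 hsub1
  have hI2 := hIeq q2 hsub2
  have hI3 := hIeq q3 hsub3
  have hI4 := hIeq q4 hsub4
  have hmemK : ∀ q : ℤ × ℤ, cnbr kingGrid q ⊆ S → q ∈ C → q ∈ K :=
    fun q h hq => ⟨hq, hmemS q h⟩
  have h012 : K.ncard = 0 ∨ K.ncard = 1 ∨ K.ncard = 2 := by omega
  rcases h012 with h0 | h1 | h2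
  · -- no codewords: contradicts domination
    rw [Set.ncard_eq_zero hKfin] at h0
    obtain ⟨x, hx⟩ := hC.1 q1
    rw [hI1, h0] at hx
    exact hx.2
  · -- one codeword c
    obtain ⟨c, hc⟩ := Set.ncard_eq_one.mp h1
    have hQ : ∀ q : ℤ × ℤ, cnbr kingGrid q ⊆ S → iset kingGrid C q = {c} := by
      intro q hq
      have he := hIeq q hq
      rw [hc] at he
      obtain ⟨x, hx⟩ := hC.1 q
      rw [he] at hx
      rw [he]
      ext y
      constructor
      · rintro ⟨-, hy⟩; exact hy
      · rintro rfl
        obtain ⟨hx1, hx2⟩ := hx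
        rw [Set.mem_singleton_iff] at hx2
        exact ⟨hx2 ▸ hx1, rfl⟩
    have hcode : ∀ q : ℤ × ℤ, cnbr kingGrid q ⊆ S → q ∈ C → q = c := by
      intro q hq hqC
      have := hmemK q hq hqC
      rwa [hc, Set.mem_singleton_iff] at this
    by_cases h3 : q3 ∈ C
    · have e3 : q3 = c := hcode q3 hsub3 h3
      have hn1 : q1 ∉ C := fun h => h13.ne (by rw [hcode q1 hsub1 h, e3])
      have hn2 : q2 ∉ C := fun h => h23.ne' (by rw [hcode q2 hsub2 h, e3])
      exact hC.2 q1 q2 h12 hn1 hn2 (by rw [hQ q1 hsub1, hQ q2 hsub2])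
    · by_cases h4 : q4 ∈ C
      · have e4 : q4 = c := hcode q4 hsub4 h4
        have hn1 : q1 ∉ C := fun h => h14.ne (by rw [hcode q1 hsub1 h, e4])
        have hn2 : q2 ∉ C := fun h => h24.ne' (by rw [hcode q2 hsub2 h, e4])
        exact hC.2 q1 q2 h12 hn1 hn2 (by rw [hQ q1 hsub1, hQ q2 hsub2])
      · exact hC.2 q3 q4 h34 h3 h4 (by rw [hQ q3 hsub3, hQ q4 hsub4])
  · -- two codewords c, d
    obtain ⟨c, d, hcd, hK2⟩ := Set.ncard_eq_two.mp h2
    have hJ1 : iset kingGrid C q1 = cnbr kingGrid q1 ∩ {c, d} := by rw [hI1, hK2]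
    have hJ2 : iset kingGrid C q2 = cnbr kingGrid q2 ∩ {c, d} := by rw [hI2, hK2]
    have hJ3 : iset kingGrid C q3 = cnbr kingGrid q3 ∩ {c, d} := by rw [hI3, hK2]
    have hJ4 : iset kingGrid C q4 = cnbr kingGrid q4 ∩ {c, d} := by rw [hI4, hK2]
    have hJ1' : iset kingGrid C q1 = cnbr kingGrid q1 ∩ {d, c} := by rw [hJ1, Set.pair_comm]
    have hJ2' : iset kingGrid C q2 = cnbr kingGrid q2 ∩ {d, c} := by rw [hJ2, Set.pair_comm]
    have hJ3' : iset kingGrid C q3 = cnbr kingGrid q3 ∩ {d, c} := by rw [hJ3, Set.pair_comm]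
    have hJ4' : iset kingGrid C q4 = cnbr kingGrid q4 ∩ {d, c} := by rw [hJ4, Set.pair_comm]
    have hm : ∀ q : ℤ × ℤ, cnbr kingGrid q ⊆ S → q ∈ C → q = c ∨ q = d := by
      intro q hq hqC
      have := hmemK q hq hqC
      rw [hK2] at this
      simpa using this
    have hm1 := hm q1 hsub1
    have hm2 := hm q2 hsub2
    have hm3 := hm q3 hsub3
    have hm4 := hm q4 hsub4
    have hm' : ∀ q : ℤ × ℤ, (q ∈ C → q = c ∨ q = d) → (q ∈ C → q = d ∨ q = c) :=
      fun q h hq => (h hq).symm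
    by_cases g1 : q1 ∈ C
    · rcases hm1 g1 with e | e
      · exact key1 C hC c d q1 q2 q3 q4 h12 h13 h14 h23 h24 h34 hJ2 hJ3 hJ4 e hm2 hm3 hm4
      · exact key1 C hC d c q1 q2 q3 q4 h12 h13 h14 h23 h24 h34 hJ2' hJ3' hJ4' e
          (hm' q2 hm2) (hm' q3 hm3) (hm' q4 hm4)
    · by_cases g2 : q2 ∈ C
      · rcases hm2 g2 with e | e
        · exact key1 C hC c d q2 q1 q3 q4 h12.symm h23 h24 h13 h14 h34 hJ1 hJ3 hJ4 e hm1 hm3 hm4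
        · exact key1 C hC d c q2 q1 q3 q4 h12.symm h23 h24 h13 h14 h34 hJ1' hJ3' hJ4' e
            (hm' q1 hm1) (hm' q3 hm3) (hm' q4 hm4)
      · by_cases g3 : q3 ∈ C
        · rcases hm3 g3 with e | e
          · exact key1 C hC c d q3 q1 q2 q4 h13.symm h23.symm h34 h12 h14 h24 hJ1 hJ2 hJ4 e hm1 hm2 hm4
          · exact key1 C hC d c q3 q1 q2 q4 h13.symm h23.symm h34 h12 h14 h24 hJ1' hJ2' hJ4' e
              (hm' q1 hm1) (hm' q2 hm2) (hm' q4 hm4)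
        · by_cases g4 : q4 ∈ C
          · rcases hm4 g4 with e | e
            · exact key1 C hC c d q4 q1 q2 q3 h14.symm h24.symm h34.symm h12 h13 h23 hJ1 hJ2 hJ3 e hm1 hm2 hm3
            · exact key1 C hC d c q4 q1 q2 q3 h14.symm h24.symm h34.symm h12 h13 h23 hJ1' hJ2' hJ3' e
                (hm' q1 hm1) (hm' q2 hm2) (hm' q3 hm3)
          · exact key0 C hC c d q1 q2 q3 q4 h12 h13 h14 h23 h24 h34 hJ1 hJ2 hJ3 hJ4 g1 g2 g3 g4
end

section
/- Let C be a local identifying code in the triangular grid. Then the share s(c) of every codeword c ∈ C is at most 4. -/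
open SimpleGraph

/-- The triangular grid. -/
def triGrid : SimpleGraph (ℤ × ℤ) where
  Adj u v := u - v = (1, 0) ∨ u - v = (-1, 0) ∨ u - v = (0, 1) ∨ u - v = (0, -1) ∨
    u - v = (1, 1) ∨ u - v = (-1, -1)
  symm := by
    constructor
    intro u v h
    have hvu : v - u = -(u - v) := by ring
    rcases h with h | h | h | h | h | h <;> rw [hvu, h] <;> simp [Prod.ext_iff]
  loopless := by
    constructor
    intro u h
    simp [Prod.ext_iff, sub_self] at h

/-! ### Auxiliary machinery for `stmt17` -/

/-- The seven closed-neighbourhood directions. -/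
def D7 : Finset (ℤ × ℤ) := {(0,0),(1,0),(1,1),(0,1),(-1,0),(-1,-1),(0,-1)}

def N7 (u : ℤ × ℤ) : Finset (ℤ × ℤ) := D7.map (addLeftEmbedding u)

def bn (b : Bool) : ℕ := cond b 1 0

lemma bn_le (b : Bool) : bn b ≤ 1 := by cases b <;> simp [bn]

lemma bnd (P : Prop) [Decidable P] : bn (decide P) = if P then 1 else 0 := by
  by_cases h : P <;> simp [h, bn]

lemma outer3 (p q r : Prop) [Decidable p] [Decidable q] [Decidable r] [Decidable (p ∨ q ∨ r)] :
    bn (decide (p ∨ q ∨ r)) ≤ (if p then 1 else 0) + (if q then 1 else 0) + (if r then 1 else 0) := by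
  by_cases hp : p <;> by_cases hq : q <;> by_cases hr : r <;> simp [bn, hp, hq, hr]

lemma recip (m : ℕ) (h1 : 1 ≤ m) (h2 : m ≤ 7) : (1:ℝ)/m = ((420/m : ℕ) : ℝ)/420 := by
  interval_cases m <;> norm_num

lemma adjHelp {u v : ℤ × ℤ} (h : u - v = (1,0) ∨ u - v = (-1,0) ∨ u - v = (0,1) ∨
    u - v = (0,-1) ∨ u - v = (1,1) ∨ u - v = (-1,-1)) : triGrid.Adj u v := h

lemma mem_cnbr (u x : ℤ × ℤ) : x ∈ cnbr triGrid u ↔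
    x = u ∨ x = u + (1,0) ∨ x = u + (1,1) ∨ x = u + (0,1) ∨ x = u + (-1,0) ∨
    x = u + (-1,-1) ∨ x = u + (0,-1) := by
  simp only [cnbr, Set.mem_insert_iff, mem_neighborSet, triGrid, Prod.ext_iff,
    Prod.fst_sub, Prod.snd_sub, Prod.fst_add, Prod.snd_add]
  constructor <;> intro h <;> rcases h with h|h|h|h|h|h|h <;> simp_all <;> omega

lemma cnbr_eq (u : ℤ × ℤ) : cnbr triGrid u = ↑(N7 u) := by
  ext x
  rw [mem_cnbr]
  simp [N7, D7, eq_comm, Prod.mk_zero_zero]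

lemma sumD7 {M : Type*} [AddCommMonoid M] (f : ℤ × ℤ → M) :
    ∑ d ∈ D7, f d = f (0,0) + f (1,0) + f (1,1) + f (0,1) + f (-1,0) + f (-1,-1) + f (0,-1) := by
  rw [D7]
  rw [Finset.sum_insert (by decide), Finset.sum_insert (by decide),
    Finset.sum_insert (by decide), Finset.sum_insert (by decide),
    Finset.sum_insert (by decide), Finset.sum_insert (by decide), Finset.sum_singleton]
  simp only [add_assoc]

open Classical in
lemma ncard_iset (C : Set (ℤ × ℤ)) (u : ℤ × ℤ) :
    (iset triGrid C u).ncard =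
    ∑ d ∈ D7, (if u + d ∈ C then 1 else 0) := by
  classical
  have h1 : iset triGrid C u = ↑((N7 u).filter (· ∈ C)) := by
    rw [iset, cnbr_eq]
    ext x; simp [Finset.mem_filter]
  rw [h1, Set.ncard_coe_finset, Finset.card_filter, N7, Finset.sum_map]
  refine Finset.sum_congr rfl fun d _ => ?_
  simp [addLeftEmbedding_apply]

lemma share_eq (C : Set (ℤ × ℤ)) (c : ℤ × ℤ) :
    share triGrid C c = ∑ d ∈ D7, (1 : ℝ) / (iset triGrid C (c + d)).ncard := by
  rw [share, cnbr_eq, finsum_mem_coe_finset, N7, Finset.sum_map]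
  simp [addLeftEmbedding_apply]

lemma witness {C : Set (ℤ × ℤ)} {u v : ℤ × ℤ} (h : iset triGrid C u ≠ iset triGrid C v) :
    ∃ x ∈ C, (x ∈ cnbr triGrid u ∧ x ∉ cnbr triGrid v) ∨
      (x ∈ cnbr triGrid v ∧ x ∉ cnbr triGrid u) := by
  by_contra hcon
  push_neg at hcon
  apply h
  unfold iset
  ext x
  simp only [Set.mem_inter_iff]
  constructor <;> rintro ⟨h1, h2⟩
  · exact ⟨(hcon x h2).1 h1, h2⟩
  · exact ⟨(hcon x h2).2 h1, h2⟩

set_option maxHeartbeats 4000000 in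
lemma key : ∀ b1 b2 b3 b4 b5 b6 o1 o2 o3 o4 o5 o6 : Bool,
  ((b3 || b4 || b5 || o1) && (b4 || b5 || b6 || o2) && (b5 || b6 || b1 || o3) &&
   (b6 || b1 || b2 || o4) && (b1 || b2 || b3 || o5) && (b2 || b3 || b4 || o6) &&
   (b6 || b3 || o1 || o2) && (b1 || b4 || o2 || o3) && (b2 || b5 || o3 || o4) &&
   (b3 || b6 || o4 || o5) && (b4 || b1 || o5 || o6) && (b5 || b2 || o6 || o1)) = true →
  420 / (1 + bn b1 + bn b2 + bn b3 + bn b4 + bn b5 + bn b6)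
  + 420 / (1 + bn b6 + bn b1 + bn b2 + bn o1)
  + 420 / (1 + bn b1 + bn b2 + bn b3 + bn o2)
  + 420 / (1 + bn b2 + bn b3 + bn b4 + bn o3)
  + 420 / (1 + bn b3 + bn b4 + bn b5 + bn o4)
  + 420 / (1 + bn b4 + bn b5 + bn b6 + bn o5)
  + 420 / (1 + bn b5 + bn b6 + bn b1 + bn o6) ≤ 1680 := by decide


open Classical in
lemma nexp0 (C : Set (ℤ × ℤ)) (c : ℤ × ℤ) : (iset triGrid C (c + (0,0))).ncard =
    (if c + (0,0) ∈ C then 1 else 0) + (if c + (1,0) ∈ C then 1 else 0) + (if c + (1,1) ∈ C then 1 else 0) + (if c + (0,1) ∈ C then 1 else 0) + (if c + (-1,0) ∈ C then 1 else 0) + (if c + (-1,-1) ∈ C then 1 else 0) + (if c + (0,-1) ∈ C then 1 else 0) := by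
  rw [ncard_iset, sumD7]
  simp only [add_assoc, Prod.mk_add_mk]
  norm_num

open Classical in
lemma nexp1 (C : Set (ℤ × ℤ)) (c : ℤ × ℤ) : (iset triGrid C (c + (1,0))).ncard =
    (if c + (1,0) ∈ C then 1 else 0) + (if c + (2,0) ∈ C then 1 else 0) + (if c + (2,1) ∈ C then 1 else 0) + (if c + (1,1) ∈ C then 1 else 0) + (if c + (0,0) ∈ C then 1 else 0) + (if c + (0,-1) ∈ C then 1 else 0) + (if c + (1,-1) ∈ C then 1 else 0) := by
  rw [ncard_iset, sumD7]
  simp only [add_assoc, Prod.mk_add_mk]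
  norm_num

open Classical in
lemma nexp2 (C : Set (ℤ × ℤ)) (c : ℤ × ℤ) : (iset triGrid C (c + (1,1))).ncard =
    (if c + (1,1) ∈ C then 1 else 0) + (if c + (2,1) ∈ C then 1 else 0) + (if c + (2,2) ∈ C then 1 else 0) + (if c + (1,2) ∈ C then 1 else 0) + (if c + (0,1) ∈ C then 1 else 0) + (if c + (0,0) ∈ C then 1 else 0) + (if c + (1,0) ∈ C then 1 else 0) := by
  rw [ncard_iset, sumD7]
  simp only [add_assoc, Prod.mk_add_mk]
  norm_num

open Classical in
lemma nexp3 (C : Set (ℤ × ℤ)) (c : ℤ × ℤ) : (iset triGrid C (c + (0,1))).ncard =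
    (if c + (0,1) ∈ C then 1 else 0) + (if c + (1,1) ∈ C then 1 else 0) + (if c + (1,2) ∈ C then 1 else 0) + (if c + (0,2) ∈ C then 1 else 0) + (if c + (-1,1) ∈ C then 1 else 0) + (if c + (-1,0) ∈ C then 1 else 0) + (if c + (0,0) ∈ C then 1 else 0) := by
  rw [ncard_iset, sumD7]
  simp only [add_assoc, Prod.mk_add_mk]
  norm_num

open Classical in
lemma nexp4 (C : Set (ℤ × ℤ)) (c : ℤ × ℤ) : (iset triGrid C (c + (-1,0))).ncard =
    (if c + (-1,0) ∈ C then 1 else 0) + (if c + (0,0) ∈ C then 1 else 0) + (if c + (0,1) ∈ C then 1 else 0) + (if c + (-1,1) ∈ C then 1 else 0) + (if c + (-2,0) ∈ C then 1 else 0) + (if c + (-2,-1) ∈ C then 1 else 0) + (if c + (-1,-1) ∈ C then 1 else 0) := by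
  rw [ncard_iset, sumD7]
  simp only [add_assoc, Prod.mk_add_mk]
  norm_num

open Classical in
lemma nexp5 (C : Set (ℤ × ℤ)) (c : ℤ × ℤ) : (iset triGrid C (c + (-1,-1))).ncard =
    (if c + (-1,-1) ∈ C then 1 else 0) + (if c + (0,-1) ∈ C then 1 else 0) + (if c + (0,0) ∈ C then 1 else 0) + (if c + (-1,0) ∈ C then 1 else 0) + (if c + (-2,-1) ∈ C then 1 else 0) + (if c + (-2,-2) ∈ C then 1 else 0) + (if c + (-1,-2) ∈ C then 1 else 0) := by
  rw [ncard_iset, sumD7]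
  simp only [add_assoc, Prod.mk_add_mk]
  norm_num

open Classical in
lemma nexp6 (C : Set (ℤ × ℤ)) (c : ℤ × ℤ) : (iset triGrid C (c + (0,-1))).ncard =
    (if c + (0,-1) ∈ C then 1 else 0) + (if c + (1,-1) ∈ C then 1 else 0) + (if c + (1,0) ∈ C then 1 else 0) + (if c + (0,0) ∈ C then 1 else 0) + (if c + (-1,-1) ∈ C then 1 else 0) + (if c + (-1,-2) ∈ C then 1 else 0) + (if c + (0,-2) ∈ C then 1 else 0) := by
  rw [ncard_iset, sumD7]
  simp only [add_assoc, Prod.mk_add_mk]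
  norm_num

open Classical in
lemma conL1 (C : Set (ℤ × ℤ)) (c : ℤ × ℤ)
    (hloc : ∀ u v, triGrid.Adj u v → iset triGrid C u ≠ iset triGrid C v) :
    (decide (c + (0,1) ∈ C) || decide (c + (-1,0) ∈ C) || decide (c + (-1,-1) ∈ C) || decide (c + (1,-1) ∈ C ∨ c + (2,0) ∈ C ∨ c + (2,1) ∈ C)) = true := by
  simp only [Bool.or_eq_true, decide_eq_true_eq]
  have hadj : triGrid.Adj (c + (0,0)) (c + (1,0)) := adjHelp (by simp [Prod.ext_iff])
  obtain ⟨x, hxC, hx⟩ := witness (hloc _ _ hadj)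
  simp only [mem_cnbr] at hx
  simp only [add_assoc, Prod.mk_add_mk] at hx ⊢
  norm_num at hx ⊢
  rcases hx with ⟨h1, h2⟩ | ⟨h1, h2⟩ <;> rcases h1 with rfl|rfl|rfl|rfl|rfl|rfl|rfl <;> simp_all

open Classical in
lemma conL2 (C : Set (ℤ × ℤ)) (c : ℤ × ℤ)
    (hloc : ∀ u v, triGrid.Adj u v → iset triGrid C u ≠ iset triGrid C v) :
    (decide (c + (-1,0) ∈ C) || decide (c + (-1,-1) ∈ C) || decide (c + (0,-1) ∈ C) || decide (c + (1,2) ∈ C ∨ c + (2,1) ∈ C ∨ c + (2,2) ∈ C)) = true := by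
  simp only [Bool.or_eq_true, decide_eq_true_eq]
  have hadj : triGrid.Adj (c + (0,0)) (c + (1,1)) := adjHelp (by simp [Prod.ext_iff])
  obtain ⟨x, hxC, hx⟩ := witness (hloc _ _ hadj)
  simp only [mem_cnbr] at hx
  simp only [add_assoc, Prod.mk_add_mk] at hx ⊢
  norm_num at hx ⊢
  rcases hx with ⟨h1, h2⟩ | ⟨h1, h2⟩ <;> rcases h1 with rfl|rfl|rfl|rfl|rfl|rfl|rfl <;> simp_all

open Classical in
lemma conL3 (C : Set (ℤ × ℤ)) (c : ℤ × ℤ)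
    (hloc : ∀ u v, triGrid.Adj u v → iset triGrid C u ≠ iset triGrid C v) :
    (decide (c + (-1,-1) ∈ C) || decide (c + (0,-1) ∈ C) || decide (c + (1,0) ∈ C) || decide (c + (-1,1) ∈ C ∨ c + (0,2) ∈ C ∨ c + (1,2) ∈ C)) = true := by
  simp only [Bool.or_eq_true, decide_eq_true_eq]
  have hadj : triGrid.Adj (c + (0,0)) (c + (0,1)) := adjHelp (by simp [Prod.ext_iff])
  obtain ⟨x, hxC, hx⟩ := witness (hloc _ _ hadj)
  simp only [mem_cnbr] at hx
  simp only [add_assoc, Prod.mk_add_mk] at hx ⊢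
  norm_num at hx ⊢
  rcases hx with ⟨h1, h2⟩ | ⟨h1, h2⟩ <;> rcases h1 with rfl|rfl|rfl|rfl|rfl|rfl|rfl <;> simp_all

open Classical in
lemma conL4 (C : Set (ℤ × ℤ)) (c : ℤ × ℤ)
    (hloc : ∀ u v, triGrid.Adj u v → iset triGrid C u ≠ iset triGrid C v) :
    (decide (c + (0,-1) ∈ C) || decide (c + (1,0) ∈ C) || decide (c + (1,1) ∈ C) || decide (c + (-2,-1) ∈ C ∨ c + (-2,0) ∈ C ∨ c + (-1,1) ∈ C)) = true := by
  simp only [Bool.or_eq_true, decide_eq_true_eq]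
  have hadj : triGrid.Adj (c + (0,0)) (c + (-1,0)) := adjHelp (by simp [Prod.ext_iff])
  obtain ⟨x, hxC, hx⟩ := witness (hloc _ _ hadj)
  simp only [mem_cnbr] at hx
  simp only [add_assoc, Prod.mk_add_mk] at hx ⊢
  norm_num at hx ⊢
  rcases hx with ⟨h1, h2⟩ | ⟨h1, h2⟩ <;> rcases h1 with rfl|rfl|rfl|rfl|rfl|rfl|rfl <;> simp_all

open Classical in
lemma conL5 (C : Set (ℤ × ℤ)) (c : ℤ × ℤ)
    (hloc : ∀ u v, triGrid.Adj u v → iset triGrid C u ≠ iset triGrid C v) :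
    (decide (c + (1,0) ∈ C) || decide (c + (1,1) ∈ C) || decide (c + (0,1) ∈ C) || decide (c + (-2,-2) ∈ C ∨ c + (-2,-1) ∈ C ∨ c + (-1,-2) ∈ C)) = true := by
  simp only [Bool.or_eq_true, decide_eq_true_eq]
  have hadj : triGrid.Adj (c + (0,0)) (c + (-1,-1)) := adjHelp (by simp [Prod.ext_iff])
  obtain ⟨x, hxC, hx⟩ := witness (hloc _ _ hadj)
  simp only [mem_cnbr] at hx
  simp only [add_assoc, Prod.mk_add_mk] at hx ⊢
  norm_num at hx ⊢
  rcases hx with ⟨h1, h2⟩ | ⟨h1, h2⟩ <;> rcases h1 with rfl|rfl|rfl|rfl|rfl|rfl|rfl <;> simp_all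

open Classical in
lemma conL6 (C : Set (ℤ × ℤ)) (c : ℤ × ℤ)
    (hloc : ∀ u v, triGrid.Adj u v → iset triGrid C u ≠ iset triGrid C v) :
    (decide (c + (1,1) ∈ C) || decide (c + (0,1) ∈ C) || decide (c + (-1,0) ∈ C) || decide (c + (-1,-2) ∈ C ∨ c + (0,-2) ∈ C ∨ c + (1,-1) ∈ C)) = true := by
  simp only [Bool.or_eq_true, decide_eq_true_eq]
  have hadj : triGrid.Adj (c + (0,0)) (c + (0,-1)) := adjHelp (by simp [Prod.ext_iff])
  obtain ⟨x, hxC, hx⟩ := witness (hloc _ _ hadj)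
  simp only [mem_cnbr] at hx
  simp only [add_assoc, Prod.mk_add_mk] at hx ⊢
  norm_num at hx ⊢
  rcases hx with ⟨h1, h2⟩ | ⟨h1, h2⟩ <;> rcases h1 with rfl|rfl|rfl|rfl|rfl|rfl|rfl <;> simp_all

open Classical in
lemma conL7 (C : Set (ℤ × ℤ)) (c : ℤ × ℤ)
    (hloc : ∀ u v, triGrid.Adj u v → iset triGrid C u ≠ iset triGrid C v) :
    (decide (c + (0,-1) ∈ C) || decide (c + (0,1) ∈ C) || decide (c + (1,-1) ∈ C ∨ c + (2,0) ∈ C ∨ c + (2,1) ∈ C) || decide (c + (1,2) ∈ C ∨ c + (2,1) ∈ C ∨ c + (2,2) ∈ C)) = true := by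
  simp only [Bool.or_eq_true, decide_eq_true_eq]
  have hadj : triGrid.Adj (c + (1,0)) (c + (1,1)) := adjHelp (by simp [Prod.ext_iff])
  obtain ⟨x, hxC, hx⟩ := witness (hloc _ _ hadj)
  simp only [mem_cnbr] at hx
  simp only [add_assoc, Prod.mk_add_mk] at hx ⊢
  norm_num at hx ⊢
  rcases hx with ⟨h1, h2⟩ | ⟨h1, h2⟩ <;> rcases h1 with rfl|rfl|rfl|rfl|rfl|rfl|rfl <;> simp_all

open Classical in
lemma conL8 (C : Set (ℤ × ℤ)) (c : ℤ × ℤ)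
    (hloc : ∀ u v, triGrid.Adj u v → iset triGrid C u ≠ iset triGrid C v) :
    (decide (c + (1,0) ∈ C) || decide (c + (-1,0) ∈ C) || decide (c + (1,2) ∈ C ∨ c + (2,1) ∈ C ∨ c + (2,2) ∈ C) || decide (c + (-1,1) ∈ C ∨ c + (0,2) ∈ C ∨ c + (1,2) ∈ C)) = true := by
  simp only [Bool.or_eq_true, decide_eq_true_eq]
  have hadj : triGrid.Adj (c + (1,1)) (c + (0,1)) := adjHelp (by simp [Prod.ext_iff])
  obtain ⟨x, hxC, hx⟩ := witness (hloc _ _ hadj)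
  simp only [mem_cnbr] at hx
  simp only [add_assoc, Prod.mk_add_mk] at hx ⊢
  norm_num at hx ⊢
  rcases hx with ⟨h1, h2⟩ | ⟨h1, h2⟩ <;> rcases h1 with rfl|rfl|rfl|rfl|rfl|rfl|rfl <;> simp_all

open Classical in
lemma conL9 (C : Set (ℤ × ℤ)) (c : ℤ × ℤ)
    (hloc : ∀ u v, triGrid.Adj u v → iset triGrid C u ≠ iset triGrid C v) :
    (decide (c + (1,1) ∈ C) || decide (c + (-1,-1) ∈ C) || decide (c + (-1,1) ∈ C ∨ c + (0,2) ∈ C ∨ c + (1,2) ∈ C) || decide (c + (-2,-1) ∈ C ∨ c + (-2,0) ∈ C ∨ c + (-1,1) ∈ C)) = true := by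
  simp only [Bool.or_eq_true, decide_eq_true_eq]
  have hadj : triGrid.Adj (c + (0,1)) (c + (-1,0)) := adjHelp (by simp [Prod.ext_iff])
  obtain ⟨x, hxC, hx⟩ := witness (hloc _ _ hadj)
  simp only [mem_cnbr] at hx
  simp only [add_assoc, Prod.mk_add_mk] at hx ⊢
  norm_num at hx ⊢
  rcases hx with ⟨h1, h2⟩ | ⟨h1, h2⟩ <;> rcases h1 with rfl|rfl|rfl|rfl|rfl|rfl|rfl <;> simp_all

open Classical in
lemma conL10 (C : Set (ℤ × ℤ)) (c : ℤ × ℤ)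
    (hloc : ∀ u v, triGrid.Adj u v → iset triGrid C u ≠ iset triGrid C v) :
    (decide (c + (0,1) ∈ C) || decide (c + (0,-1) ∈ C) || decide (c + (-2,-1) ∈ C ∨ c + (-2,0) ∈ C ∨ c + (-1,1) ∈ C) || decide (c + (-2,-2) ∈ C ∨ c + (-2,-1) ∈ C ∨ c + (-1,-2) ∈ C)) = true := by
  simp only [Bool.or_eq_true, decide_eq_true_eq]
  have hadj : triGrid.Adj (c + (-1,0)) (c + (-1,-1)) := adjHelp (by simp [Prod.ext_iff])
  obtain ⟨x, hxC, hx⟩ := witness (hloc _ _ hadj)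
  simp only [mem_cnbr] at hx
  simp only [add_assoc, Prod.mk_add_mk] at hx ⊢
  norm_num at hx ⊢
  rcases hx with ⟨h1, h2⟩ | ⟨h1, h2⟩ <;> rcases h1 with rfl|rfl|rfl|rfl|rfl|rfl|rfl <;> simp_all

open Classical in
lemma conL11 (C : Set (ℤ × ℤ)) (c : ℤ × ℤ)
    (hloc : ∀ u v, triGrid.Adj u v → iset triGrid C u ≠ iset triGrid C v) :
    (decide (c + (-1,0) ∈ C) || decide (c + (1,0) ∈ C) || decide (c + (-2,-2) ∈ C ∨ c + (-2,-1) ∈ C ∨ c + (-1,-2) ∈ C) || decide (c + (-1,-2) ∈ C ∨ c + (0,-2) ∈ C ∨ c + (1,-1) ∈ C)) = true := by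
  simp only [Bool.or_eq_true, decide_eq_true_eq]
  have hadj : triGrid.Adj (c + (-1,-1)) (c + (0,-1)) := adjHelp (by simp [Prod.ext_iff])
  obtain ⟨x, hxC, hx⟩ := witness (hloc _ _ hadj)
  simp only [mem_cnbr] at hx
  simp only [add_assoc, Prod.mk_add_mk] at hx ⊢
  norm_num at hx ⊢
  rcases hx with ⟨h1, h2⟩ | ⟨h1, h2⟩ <;> rcases h1 with rfl|rfl|rfl|rfl|rfl|rfl|rfl <;> simp_all

open Classical in
lemma conL12 (C : Set (ℤ × ℤ)) (c : ℤ × ℤ)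
    (hloc : ∀ u v, triGrid.Adj u v → iset triGrid C u ≠ iset triGrid C v) :
    (decide (c + (-1,-1) ∈ C) || decide (c + (1,1) ∈ C) || decide (c + (-1,-2) ∈ C ∨ c + (0,-2) ∈ C ∨ c + (1,-1) ∈ C) || decide (c + (1,-1) ∈ C ∨ c + (2,0) ∈ C ∨ c + (2,1) ∈ C)) = true := by
  simp only [Bool.or_eq_true, decide_eq_true_eq]
  have hadj : triGrid.Adj (c + (0,-1)) (c + (1,0)) := adjHelp (by simp [Prod.ext_iff])
  obtain ⟨x, hxC, hx⟩ := witness (hloc _ _ hadj)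
  simp only [mem_cnbr] at hx
  simp only [add_assoc, Prod.mk_add_mk] at hx ⊢
  norm_num at hx ⊢
  rcases hx with ⟨h1, h2⟩ | ⟨h1, h2⟩ <;> rcases h1 with rfl|rfl|rfl|rfl|rfl|rfl|rfl <;> simp_all

lemma mstep0 (cen p1 p2 p3 p4 p5 p6 : Prop) [Decidable cen] [Decidable p1] [Decidable p2] [Decidable p3] [Decidable p4] [Decidable p5] [Decidable p6] (hcen : cen) :
    1 + bn (decide p1) + bn (decide p2) + bn (decide p3) + bn (decide p4) + bn (decide p5) + bn (decide p6) ≤ (if cen then 1 else 0) + (if p1 then 1 else 0) + (if p2 then 1 else 0) + (if p3 then 1 else 0) + (if p4 then 1 else 0) + (if p5 then 1 else 0) + (if p6 then 1 else 0) := by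
  have e_p1 := bnd p1
  have e_p2 := bnd p2
  have e_p3 := bnd p3
  have e_p4 := bnd p4
  have e_p5 := bnd p5
  have e_p6 := bnd p6
  have hc' : (if cen then 1 else 0) = 1 := if_pos hcen
  omega

lemma mstep1 (p1 w2 w3 p2 cen p6 w1 : Prop) [Decidable p1] [Decidable w2] [Decidable w3] [Decidable p2] [Decidable cen] [Decidable p6] [Decidable w1] [Decidable (w1 ∨ w2 ∨ w3)] (hcen : cen) :
    1 + bn (decide p6) + bn (decide p1) + bn (decide p2) + bn (decide (w1 ∨ w2 ∨ w3)) ≤ (if p1 then 1 else 0) + (if w2 then 1 else 0) + (if w3 then 1 else 0) + (if p2 then 1 else 0) + (if cen then 1 else 0) + (if p6 then 1 else 0) + (if w1 then 1 else 0) := by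
  have e_p1 := bnd p1
  have e_w2 := bnd w2
  have e_w3 := bnd w3
  have e_p2 := bnd p2
  have e_p6 := bnd p6
  have e_w1 := bnd w1
  have eo := outer3 w1 w2 w3
  have hc' : (if cen then 1 else 0) = 1 := if_pos hcen
  omega

lemma mstep2 (p2 w2 w3 w1 p3 cen p1 : Prop) [Decidable p2] [Decidable w2] [Decidable w3] [Decidable w1] [Decidable p3] [Decidable cen] [Decidable p1] [Decidable (w1 ∨ w2 ∨ w3)] (hcen : cen) :
    1 + bn (decide p1) + bn (decide p2) + bn (decide p3) + bn (decide (w1 ∨ w2 ∨ w3)) ≤ (if p2 then 1 else 0) + (if w2 then 1 else 0) + (if w3 then 1 else 0) + (if w1 then 1 else 0) + (if p3 then 1 else 0) + (if cen then 1 else 0) + (if p1 then 1 else 0) := by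
  have e_p2 := bnd p2
  have e_w2 := bnd w2
  have e_w3 := bnd w3
  have e_w1 := bnd w1
  have e_p3 := bnd p3
  have e_p1 := bnd p1
  have eo := outer3 w1 w2 w3
  have hc' : (if cen then 1 else 0) = 1 := if_pos hcen
  omega

lemma mstep3 (p3 p2 w3 w2 w1 p4 cen : Prop) [Decidable p3] [Decidable p2] [Decidable w3] [Decidable w2] [Decidable w1] [Decidable p4] [Decidable cen] [Decidable (w1 ∨ w2 ∨ w3)] (hcen : cen) :
    1 + bn (decide p2) + bn (decide p3) + bn (decide p4) + bn (decide (w1 ∨ w2 ∨ w3)) ≤ (if p3 then 1 else 0) + (if p2 then 1 else 0) + (if w3 then 1 else 0) + (if w2 then 1 else 0) + (if w1 then 1 else 0) + (if p4 then 1 else 0) + (if cen then 1 else 0) := by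
  have e_p3 := bnd p3
  have e_p2 := bnd p2
  have e_w3 := bnd w3
  have e_w2 := bnd w2
  have e_w1 := bnd w1
  have e_p4 := bnd p4
  have eo := outer3 w1 w2 w3
  have hc' : (if cen then 1 else 0) = 1 := if_pos hcen
  omega

lemma mstep4 (p4 cen p3 w3 w2 w1 p5 : Prop) [Decidable p4] [Decidable cen] [Decidable p3] [Decidable w3] [Decidable w2] [Decidable w1] [Decidable p5] [Decidable (w1 ∨ w2 ∨ w3)] (hcen : cen) :
    1 + bn (decide p3) + bn (decide p4) + bn (decide p5) + bn (decide (w1 ∨ w2 ∨ w3)) ≤ (if p4 then 1 else 0) + (if cen then 1 else 0) + (if p3 then 1 else 0) + (if w3 then 1 else 0) + (if w2 then 1 else 0) + (if w1 then 1 else 0) + (if p5 then 1 else 0) := by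
  have e_p4 := bnd p4
  have e_p3 := bnd p3
  have e_w3 := bnd w3
  have e_w2 := bnd w2
  have e_w1 := bnd w1
  have e_p5 := bnd p5
  have eo := outer3 w1 w2 w3
  have hc' : (if cen then 1 else 0) = 1 := if_pos hcen
  omega

lemma mstep5 (p5 p6 cen p4 w2 w1 w3 : Prop) [Decidable p5] [Decidable p6] [Decidable cen] [Decidable p4] [Decidable w2] [Decidable w1] [Decidable w3] [Decidable (w1 ∨ w2 ∨ w3)] (hcen : cen) :
    1 + bn (decide p4) + bn (decide p5) + bn (decide p6) + bn (decide (w1 ∨ w2 ∨ w3)) ≤ (if p5 then 1 else 0) + (if p6 then 1 else 0) + (if cen then 1 else 0) + (if p4 then 1 else 0) + (if w2 then 1 else 0) + (if w1 then 1 else 0) + (if w3 then 1 else 0) := by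
  have e_p5 := bnd p5
  have e_p6 := bnd p6
  have e_p4 := bnd p4
  have e_w2 := bnd w2
  have e_w1 := bnd w1
  have e_w3 := bnd w3
  have eo := outer3 w1 w2 w3
  have hc' : (if cen then 1 else 0) = 1 := if_pos hcen
  omega

lemma mstep6 (p6 w3 p1 cen p5 w1 w2 : Prop) [Decidable p6] [Decidable w3] [Decidable p1] [Decidable cen] [Decidable p5] [Decidable w1] [Decidable w2] [Decidable (w1 ∨ w2 ∨ w3)] (hcen : cen) :
    1 + bn (decide p5) + bn (decide p6) + bn (decide p1) + bn (decide (w1 ∨ w2 ∨ w3)) ≤ (if p6 then 1 else 0) + (if w3 then 1 else 0) + (if p1 then 1 else 0) + (if cen then 1 else 0) + (if p5 then 1 else 0) + (if w1 then 1 else 0) + (if w2 then 1 else 0) := by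
  have e_p6 := bnd p6
  have e_w3 := bnd w3
  have e_p1 := bnd p1
  have e_p5 := bnd p5
  have e_w1 := bnd w1
  have e_w2 := bnd w2
  have eo := outer3 w1 w2 w3
  have hc' : (if cen then 1 else 0) = 1 := if_pos hcen
  omega

lemma scen (n : ℕ) (x1 x2 x3 x4 x5 x6 : Bool)
    (h : 1 + bn x1 + bn x2 + bn x3 + bn x4 + bn x5 + bn x6 ≤ n) :
    (1:ℝ)/(n:ℝ) ≤ ((420/(1 + bn x1 + bn x2 + bn x3 + bn x4 + bn x5 + bn x6) : ℕ) : ℝ)/420 := by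
  set m := 1 + bn x1 + bn x2 + bn x3 + bn x4 + bn x5 + bn x6 with hm
  have h1 : 1 ≤ m := by omega
  have h7 : m ≤ 7 := by
    have := bn_le x1; have := bn_le x2; have := bn_le x3
    have := bn_le x4; have := bn_le x5; have := bn_le x6; omega
  have h2 : ((m : ℕ) : ℝ) ≤ (n : ℝ) := by exact_mod_cast h
  have h3 : (0:ℝ) < ((m : ℕ) : ℝ) := by exact_mod_cast h1
  have h4 := one_div_le_one_div_of_le h3 h2
  rw [recip _ h1 h7] at h4
  exact h4

lemma sring (n : ℕ) (x1 x2 x3 y : Bool)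
    (h : 1 + bn x1 + bn x2 + bn x3 + bn y ≤ n) :
    (1:ℝ)/(n:ℝ) ≤ ((420/(1 + bn x1 + bn x2 + bn x3 + bn y) : ℕ) : ℝ)/420 := by
  set m := 1 + bn x1 + bn x2 + bn x3 + bn y with hm
  have h1 : 1 ≤ m := by omega
  have h7 : m ≤ 7 := by
    have := bn_le x1; have := bn_le x2; have := bn_le x3; have := bn_le y; omega
  have h2 : ((m : ℕ) : ℝ) ≤ (n : ℝ) := by exact_mod_cast h
  have h3 : (0:ℝ) < ((m : ℕ) : ℝ) := by exact_mod_cast h1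
  have h4 := one_div_le_one_div_of_le h3 h2
  rw [recip _ h1 h7] at h4
  exact h4


set_option maxHeartbeats 1000000 in
/-- In the triangular grid, the share of every codeword of a local identifying code
is at most `4`. -/
theorem stmt17 (C : Set (ℤ × ℤ)) (hC : IsLocalID triGrid C) (c : ℤ × ℤ) (hc : c ∈ C) :
    share triGrid C c ≤ 4 := by
  classical
  obtain ⟨hdom, hloc⟩ := hC
  have hc0 : c + (0,0) ∈ C := by simpa [Prod.mk_zero_zero] using hc
  have m0 : 1 + bn (decide (c + (1,0) ∈ C)) + bn (decide (c + (1,1) ∈ C)) + bn (decide (c + (0,1) ∈ C)) + bn (decide (c + (-1,0) ∈ C)) + bn (decide (c + (-1,-1) ∈ C)) + bn (decide (c + (0,-1) ∈ C)) ≤ (iset triGrid C (c + (0,0))).ncard := by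
    rw [nexp0]
    exact mstep0 _ _ _ _ _ _ _ hc0
  have m1 : 1 + bn (decide (c + (0,-1) ∈ C)) + bn (decide (c + (1,0) ∈ C)) + bn (decide (c + (1,1) ∈ C)) + bn (decide (c + (1,-1) ∈ C ∨ c + (2,0) ∈ C ∨ c + (2,1) ∈ C)) ≤ (iset triGrid C (c + (1,0))).ncard := by
    rw [nexp1]
    exact mstep1 _ _ _ _ _ _ _ hc0
  have m2 : 1 + bn (decide (c + (1,0) ∈ C)) + bn (decide (c + (1,1) ∈ C)) + bn (decide (c + (0,1) ∈ C)) + bn (decide (c + (1,2) ∈ C ∨ c + (2,1) ∈ C ∨ c + (2,2) ∈ C)) ≤ (iset triGrid C (c + (1,1))).ncard := by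
    rw [nexp2]
    exact mstep2 _ _ _ _ _ _ _ hc0
  have m3 : 1 + bn (decide (c + (1,1) ∈ C)) + bn (decide (c + (0,1) ∈ C)) + bn (decide (c + (-1,0) ∈ C)) + bn (decide (c + (-1,1) ∈ C ∨ c + (0,2) ∈ C ∨ c + (1,2) ∈ C)) ≤ (iset triGrid C (c + (0,1))).ncard := by
    rw [nexp3]
    exact mstep3 _ _ _ _ _ _ _ hc0
  have m4 : 1 + bn (decide (c + (0,1) ∈ C)) + bn (decide (c + (-1,0) ∈ C)) + bn (decide (c + (-1,-1) ∈ C)) + bn (decide (c + (-2,-1) ∈ C ∨ c + (-2,0) ∈ C ∨ c + (-1,1) ∈ C)) ≤ (iset triGrid C (c + (-1,0))).ncard := by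
    rw [nexp4]
    exact mstep4 _ _ _ _ _ _ _ hc0
  have m5 : 1 + bn (decide (c + (-1,0) ∈ C)) + bn (decide (c + (-1,-1) ∈ C)) + bn (decide (c + (0,-1) ∈ C)) + bn (decide (c + (-2,-2) ∈ C ∨ c + (-2,-1) ∈ C ∨ c + (-1,-2) ∈ C)) ≤ (iset triGrid C (c + (-1,-1))).ncard := by
    rw [nexp5]
    exact mstep5 _ _ _ _ _ _ _ hc0
  have m6 : 1 + bn (decide (c + (-1,-1) ∈ C)) + bn (decide (c + (0,-1) ∈ C)) + bn (decide (c + (1,0) ∈ C)) + bn (decide (c + (-1,-2) ∈ C ∨ c + (0,-2) ∈ C ∨ c + (1,-1) ∈ C)) ≤ (iset triGrid C (c + (0,-1))).ncard := by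
    rw [nexp6]
    exact mstep6 _ _ _ _ _ _ _ hc0
  have s0 := scen _ _ _ _ _ _ _ m0
  have s1 := sring _ _ _ _ _ m1
  have s2 := sring _ _ _ _ _ m2
  have s3 := sring _ _ _ _ _ m3
  have s4 := sring _ _ _ _ _ m4
  have s5 := sring _ _ _ _ _ m5
  have s6 := sring _ _ _ _ _ m6
  have keyN := key (decide (c + (1,0) ∈ C)) (decide (c + (1,1) ∈ C)) (decide (c + (0,1) ∈ C)) (decide (c + (-1,0) ∈ C)) (decide (c + (-1,-1) ∈ C)) (decide (c + (0,-1) ∈ C)) (decide (c + (1,-1) ∈ C ∨ c + (2,0) ∈ C ∨ c + (2,1) ∈ C)) (decide (c + (1,2) ∈ C ∨ c + (2,1) ∈ C ∨ c + (2,2) ∈ C)) (decide (c + (-1,1) ∈ C ∨ c + (0,2) ∈ C ∨ c + (1,2) ∈ C)) (decide (c + (-2,-1) ∈ C ∨ c + (-2,0) ∈ C ∨ c + (-1,1) ∈ C)) (decide (c + (-2,-2) ∈ C ∨ c + (-2,-1) ∈ C ∨ c + (-1,-2) ∈ C)) (decide (c + (-1,-2) ∈ C ∨ c + (0,-2) ∈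 C ∨ c + (1,-1) ∈ C)) (by
    simp only [Bool.and_eq_true]
    exact ⟨⟨⟨⟨⟨⟨⟨⟨⟨⟨⟨conL1 C c hloc, conL2 C c hloc⟩, conL3 C c hloc⟩, conL4 C c hloc⟩, conL5 C c hloc⟩, conL6 C c hloc⟩, conL7 C c hloc⟩, conL8 C c hloc⟩, conL9 C c hloc⟩, conL10 C c hloc⟩, conL11 C c hloc⟩, conL12 C c hloc⟩)
  have keyR : ((420/(1 + bn (decide (c + (1,0) ∈ C)) + bn (decide (c + (1,1) ∈ C)) + bn (decide (c + (0,1) ∈ C)) + bn (decide (c + (-1,0) ∈ C)) + bn (decide (c + (-1,-1) ∈ C)) + bn (decide (c + (0,-1) ∈ C))) : ℕ) : ℝ) + ((420/(1 + bn (decide (c + (0,-1) ∈ C)) + bn (decide (c + (1,0) ∈ C)) + bn (decide (c + (1,1) ∈ C)) + bn (decide (c + (1,-1) ∈ C ∨ c + (2,0) ∈ C ∨ c + (2,1) ∈ C))) : ℕ) : ℝ) + ((420/(1 + bn (decide (c + (1,0) ∈ C)) + bn (decide (c + (1,1) ∈ C)) + bn (decide (c + (0,1) ∈ C)) + bn (decide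 (c + (1,2) ∈ C ∨ c + (2,1) ∈ C ∨ c + (2,2) ∈ C))) : ℕ) : ℝ) + ((420/(1 + bn (decide (c + (1,1) ∈ C)) + bn (decide (c + (0,1) ∈ C)) + bn (decide (c + (-1,0) ∈ C)) + bn (decide (c + (-1,1) ∈ C ∨ c + (0,2) ∈ C ∨ c + (1,2) ∈ C))) : ℕ) : ℝ) + ((420/(1 + bn (decide (c + (0,1) ∈ C)) + bn (decide (c + (-1,0) ∈ C)) + bn (decide (c + (-1,-1) ∈ C)) + bn (decide (c + (-2,-1) ∈ C ∨ c + (-2,0) ∈ C ∨ c + (-1,1) ∈ C))) : ℕ) : ℝ) + ((420/(1 + bn (decide (c + (-1,0) ∈ C)) + bn (decide (c + (-1,-1) ∈ C)) + bn (decide (c + (0,-1) ∈ C)) + bn (decide (c + (-2,-2) ∈ C ∨ c + (-2,-1) ∈ C ∨ c + (-1,-2) ∈ C))) : ℕ) : ℝ) + ((420/(1 + bn (decide (c + (-1,-1) ∈ C)) + bn (decide (c + (0,-1) ∈ C)) + bn (decide (c + (1,0) ∈ C)) + bn (decide (c + (-1,-2) ∈ C ∨ c + (0,-2) ∈ C ∨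 c + (1,-1) ∈ C))) : ℕ) : ℝ) ≤ 1680 := by
    exact_mod_cast keyN
  rw [share_eq, sumD7]
  linarith [s0, s1, s2, s3, s4, s5, s6, keyR]
end
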